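/- If f : [0,∞) → ℝ is s-convex in the second sense for some s ∈ (0,1), and f is continuous on [a,b] with 0 ≤ a < b, then (1/(b-a)) ∫_a^b f(x) dx ≤ (f(a) + f(b))/(s+1). -/

import Mathlib

set_option maxHeartbeats 1000000


theorem sconvex_hermite_hadamard_right
    (s a b : ℝ) (hs : s ∈ Set.Ioo (0:ℝ) 1) (ha : 0 ≤ a) (hab : a < b)
    (f : ℝ → ℝ)
    (hsconv : ∀ u v : ℝ, 0 ≤ u → 0 ≤ v → ∀ l ∈ Set.Icc (0:ℝ) 1,
      f (l * u + (1 - l) * v) ≤ l ^ s * f u + (1 - l) ^ s * f v)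
    (hcont : ContinuousOn f (Set.Icc a b)) :
    (1 / (b - a)) * ∫ x in a..b, f x ≤ (f a + f b) / (s + 1) := by
  obtain ⟨hs0, hs1⟩ := hs
  have hc : (0:ℝ) < b - a := by linarith
  have hb : (0:ℝ) ≤ b := by linarith
  set g : ℝ → ℝ := fun x => ((b - x) / (b - a)) ^ s * f a + ((x - a) / (b - a)) ^ s * f b
    with hg
  -- pointwise bound
  have hbound : ∀ x ∈ Set.Icc a b, f x ≤ g x := by
    intro x hx
    obtain ⟨hxa, hxb⟩ := hx
    set l : ℝ := (b - x) / (b - a) with hl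
    have hl0 : 0 ≤ l := div_nonneg (by linarith) hc.le
    have hl1 : l ≤ 1 := (div_le_one hc).2 (by linarith)
    have h1l : 1 - l = (x - a) / (b - a) := by
      field_simp [hl]
      rw [hl, sub_mul, div_mul_cancel₀ _ hc.ne']; ring
    have hx' : l * a + (1 - l) * b = x := by
      rw [h1l, hl]; field_simp; ring
    have := hsconv a b ha hb l ⟨hl0, hl1⟩
    rw [hx', h1l] at this
    simpa [hg, hl] using this
  -- continuity of g
  have hrpow : Continuous fun t : ℝ => t ^ s := by
    exact Real.continuous_rpow_const hs0.le
  have hgc : Continuous g := by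
    apply Continuous.add
    · exact ((hrpow.comp (by continuity)).mul continuous_const)
    · exact ((hrpow.comp (by continuity)).mul continuous_const)
  have hfint : IntervalIntegrable f MeasureTheory.volume a b :=
    hcont.intervalIntegrable_of_Icc hab.le
  have hgint : IntervalIntegrable g MeasureTheory.volume a b :=
    hgc.intervalIntegrable a b
  have hle : (∫ x in a..b, f x) ≤ ∫ x in a..b, g x :=
    intervalIntegral.integral_mono_on hab.le hfint hgint hbound
  -- compute ∫ g
  have hI0 : (∫ u in (0:ℝ)..1, u ^ s) = 1 / (s + 1) := by
    rw [integral_rpow (Or.inl (by linarith))]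
    rw [Real.one_rpow, Real.zero_rpow (by linarith)]
    ring
  have hIc : (∫ t in (0:ℝ)..(b - a), (t / (b - a)) ^ s) = (b - a) / (s + 1) := by
    rw [intervalIntegral.integral_comp_div (fun t => t ^ s) hc.ne']
    rw [zero_div, div_self hc.ne', hI0]
    simp [smul_eq_mul]
    ring
  have hI1 : (∫ x in a..b, ((x - a) / (b - a)) ^ s) = (b - a) / (s + 1) := by
    have := intervalIntegral.integral_comp_sub_right (fun t => (t / (b - a)) ^ s) a
      (a := a) (b := b)
    simpa [sub_self, hIc] using this
  have hI2 : (∫ x in a..b, ((b - x) / (b - a)) ^ s) = (b - a) / (s + 1) := by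
    have := intervalIntegral.integral_comp_sub_left (fun t => (t / (b - a)) ^ s) b
      (a := a) (b := b)
    simpa [sub_self, hIc] using this
  have hgval : (∫ x in a..b, g x) = (b - a) / (s + 1) * (f a + f b) := by
    have h1 : IntervalIntegrable (fun x => ((b - x) / (b - a)) ^ s * f a)
        MeasureTheory.volume a b := by
      exact ((hrpow.comp (by continuity)).mul continuous_const).intervalIntegrable a b
    have h2 : IntervalIntegrable (fun x => ((x - a) / (b - a)) ^ s * f b)
        MeasureTheory.volume a b := by
      exact ((hrpow.comp (by continuity)).mul continuous_const).intervalIntegrable a b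
    rw [hg]
    rw [intervalIntegral.integral_add h1 h2,
      intervalIntegral.integral_mul_const, intervalIntegral.integral_mul_const,
      hI1, hI2]
    ring
  rw [hgval] at hle
  rw [div_mul_eq_mul_div, le_div_iff₀ (by linarith : (0:ℝ) < s + 1)] at hle
  rw [div_mul_eq_mul_div, one_mul, div_le_div_iff₀ hc (by linarith : (0:ℝ) < s + 1)]
  linarith
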